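/- arXiv:1503.01663 — 2 statements merged into one kernel-verified Lean document; each statement's English description precedes it below -/
import Mathlib

section
/- Let $a_1,\dots,a_n$ be unit vectors in $\mathbb{R}^d$ and let $z \in [0,1]^n$ with $\sum_i z_i = 1$ be a distribution. Then for every $\varepsilon \in (0,1]$ there exists a distribution $w \in [0,1]^n$ with $\sum_i w_i = 1$ whose support has at most $\lceil 1/\varepsilon^2 \rceil$ nonzero entries, such that $\left\| \sum_i z_i a_i - \sum_i w_i a_i \right\|_2 \le \varepsilon$. -/
open Finset

lemma ifa_avg {n : ℕ} (z F : Fin n → ℝ) (hz0 : ∀ i, 0 ≤ z i)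
    (hz1 : ∑ i, z i = 1) : ∃ i, F i ≤ ∑ i, z i * F i := by
  by_contra h
  push_neg at h
  obtain ⟨i₀, hi₀⟩ : ∃ i, z i ≠ 0 := by
    by_contra h'
    push_neg at h'
    simp [h'] at hz1
  have hlt : ∑ i, z i * (∑ j, z j * F j) < ∑ i, z i * F i := by
    refine Finset.sum_lt_sum (fun i _ => mul_le_mul_of_nonneg_left (h i).le (hz0 i))
      ⟨i₀, Finset.mem_univ _, ?_⟩
    exact mul_lt_mul_of_pos_left (h i₀) (lt_of_le_of_ne (hz0 i₀) (Ne.symm hi₀))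
  rw [← Finset.sum_mul, hz1, one_mul] at hlt
  exact lt_irrefl _ hlt

lemma ifa_key {n d : ℕ} (a : Fin n → EuclideanSpace ℝ (Fin d))
    (ha : ∀ i, ‖a i‖ = 1) (z : Fin n → ℝ) (hz0 : ∀ i, 0 ≤ z i)
    (hz1 : ∑ i, z i = 1) (k : ℕ) :
    ∃ g : Fin k → Fin n,
      ‖(∑ j, a (g j)) - (k : ℝ) • (∑ i, z i • a i)‖ ^ 2 ≤ k := by
  set μ := ∑ i, z i • a i with hμ
  induction k with
  | zero =>
    refine ⟨fun j => j.elim0, ?_⟩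
    simp
  | succ k ih =>
    obtain ⟨g, hg⟩ := ih
    set v := (∑ j, a (g j)) - (k : ℝ) • μ with hv
    have hsum : ∑ i, z i * ‖v + (a i - μ)‖ ^ 2 = ‖v‖ ^ 2 + (1 - ‖μ‖ ^ 2) := by
      have hexp : ∀ i, ‖v + (a i - μ)‖ ^ 2
          = ‖v‖ ^ 2 + 2 * inner ℝ v (a i - μ) + ‖a i - μ‖ ^ 2 := fun i =>
        norm_add_sq_real v (a i - μ)
      have hexp2 : ∀ i, ‖a i - μ‖ ^ 2 = 1 - 2 * inner ℝ (a i) μ + ‖μ‖ ^ 2 := by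
        intro i
        rw [norm_sub_sq_real, ha i, one_pow]
      have h1 : ∑ i, z i * inner ℝ v (a i - μ) = (0 : ℝ) := by
        have : ∑ i, z i • (a i - μ) = (0 : EuclideanSpace ℝ (Fin d)) := by
          simp only [smul_sub, Finset.sum_sub_distrib, ← Finset.sum_smul, hz1, one_smul, hμ,
            sub_self]
        calc ∑ i, z i * inner ℝ v (a i - μ) = inner ℝ v (∑ i, z i • (a i - μ)) := by
              rw [inner_sum]
              exact Finset.sum_congr rfl fun i _ => by rw [real_inner_smul_right]
          _ = 0 := by rw [this, inner_zero_right]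
      have h2 : ∑ i, z i * inner ℝ (a i) μ = ‖μ‖ ^ 2 := by
        calc ∑ i, z i * inner ℝ (a i) μ = inner ℝ (∑ i, z i • a i) μ := by
              rw [sum_inner]
              exact Finset.sum_congr rfl fun i _ => by rw [real_inner_smul_left]
          _ = ‖μ‖ ^ 2 := by rw [← hμ, real_inner_self_eq_norm_sq, pow_two]
      calc ∑ i, z i * ‖v + (a i - μ)‖ ^ 2
          = ∑ i, (z i * ‖v‖ ^ 2 + 2 * (z i * inner ℝ v (a i - μ))
              + (z i * 1 - 2 * (z i * inner ℝ (a i) μ) + z i * ‖μ‖ ^ 2)) := by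
            refine Finset.sum_congr rfl fun i _ => ?_
            rw [hexp i, hexp2 i]; ring
        _ = (∑ i, z i) * ‖v‖ ^ 2 + 2 * (∑ i, z i * inner ℝ v (a i - μ))
              + ((∑ i, z i) * 1 - 2 * (∑ i, z i * inner ℝ (a i) μ)
              + (∑ i, z i) * ‖μ‖ ^ 2) := by
            simp [Finset.sum_add_distrib, Finset.sum_sub_distrib, Finset.mul_sum,
              ← Finset.sum_mul]
        _ = ‖v‖ ^ 2 + (1 - ‖μ‖ ^ 2) := by rw [hz1, h1, h2]; ring
    obtain ⟨i, hi⟩ := ifa_avg z (fun i => ‖v + (a i - μ)‖ ^ 2) hz0 hz1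
    refine ⟨Fin.snoc g i, ?_⟩
    have hrw : (∑ j : Fin (k + 1), a ((Fin.snoc g i : Fin (k + 1) → Fin n) j))
        - ((k + 1 : ℕ) : ℝ) • μ = v + (a i - μ) := by
      rw [Fin.sum_univ_castSucc]
      simp only [Fin.snoc_castSucc, Fin.snoc_last, hv]
      push_cast
      rw [add_smul, one_smul]
      abel
    rw [hrw]
    have hnn : (0 : ℝ) ≤ ‖μ‖ ^ 2 := sq_nonneg _
    push_cast
    calc ‖v + (a i - μ)‖ ^ 2 ≤ ∑ i, z i * ‖v + (a i - μ)‖ ^ 2 := hi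
      _ = ‖v‖ ^ 2 + (1 - ‖μ‖ ^ 2) := hsum
      _ ≤ (k : ℝ) + 1 := by nlinarith

theorem ifa_l2_approx (n d : ℕ) (a : Fin n → EuclideanSpace ℝ (Fin d))
    (ha : ∀ i, ‖a i‖ = 1) (z : Fin n → ℝ) (hz0 : ∀ i, 0 ≤ z i)
    (hz1 : ∑ i, z i = 1) (ε : ℝ) (hε : 0 < ε) (hε1 : ε ≤ 1) :
    ∃ w : Fin n → ℝ, (∀ i, 0 ≤ w i) ∧ (∑ i, w i = 1) ∧
      (Function.support w).toFinite.toFinset.card ≤ ⌈1 / ε ^ 2⌉₊ ∧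
      ‖∑ i, z i • a i - ∑ i, w i • a i‖ ≤ ε := by
  set k := ⌈1 / ε ^ 2⌉₊ with hk
  have hε2 : 0 < ε ^ 2 := by positivity
  have hkpos : 0 < k := by
    rw [hk]
    exact Nat.ceil_pos.mpr (by positivity)
  have hkge : 1 / ε ^ 2 ≤ (k : ℝ) := Nat.le_ceil _
  have hkposR : (0 : ℝ) < k := by exact_mod_cast hkpos
  obtain ⟨g, hg⟩ := ifa_key a ha z hz0 hz1 k
  set μ := ∑ i, z i • a i with hμ
  refine ⟨fun i => ((Finset.univ.filter (fun j => g j = i)).card : ℝ) / k,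
    fun i => by positivity, ?_, ?_, ?_⟩
  · rw [← Finset.sum_div]
    rw [div_eq_one_iff_eq (ne_of_gt hkposR)]
    have := Finset.card_eq_sum_card_fiberwise
      (fun j (_ : j ∈ (Finset.univ : Finset (Fin k))) => Finset.mem_univ (g j))
    rw [Finset.card_univ, Fintype.card_fin] at this
    exact_mod_cast this.symm
  · have hsub : (Function.support fun i =>
        ((Finset.univ.filter (fun j => g j = i)).card : ℝ) / k).toFinite.toFinset
        ⊆ Finset.image g Finset.univ := by
      intro i hi
      rw [Set.Finite.mem_toFinset, Function.mem_support] at hi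
      have hc : (Finset.univ.filter (fun j => g j = i)).card ≠ 0 := by
        intro h0
        apply hi
        simp [h0]
      obtain ⟨j, hj⟩ := Finset.card_ne_zero.mp hc
      exact Finset.mem_image.mpr ⟨j, Finset.mem_univ j, (Finset.mem_filter.mp hj).2⟩
    exact le_trans (Finset.card_le_card hsub)
      (le_trans Finset.card_image_le (by simp [hk]))
  · have hsum : ∑ i, (((Finset.univ.filter (fun j => g j = i)).card : ℝ) / k) • a i
        = (1 / (k : ℝ)) • ∑ j, a (g j) := by
      have hfib : ∑ j, a (g j)
          = ∑ i, ((Finset.univ.filter (fun j => g j = i)).card : ℝ) • a i := by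
        rw [← Finset.sum_fiberwise_of_maps_to
          (fun j (_ : j ∈ (Finset.univ : Finset (Fin k))) => Finset.mem_univ (g j))
          (fun j => a (g j))]
        refine Finset.sum_congr rfl fun i _ => ?_
        rw [Finset.sum_congr rfl (fun j hj => by
          rw [(Finset.mem_filter.mp hj).2]), Finset.sum_const, Nat.cast_smul_eq_nsmul ℝ]
      rw [hfib, Finset.smul_sum]
      refine Finset.sum_congr rfl fun i _ => ?_
      rw [smul_smul]
      congr 1
      field_simp
    rw [hsum]
    have hnorm : ‖μ - (1 / (k : ℝ)) • ∑ j, a (g j)‖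
        = (1 / (k : ℝ)) * ‖(∑ j, a (g j)) - (k : ℝ) • μ‖ := by
      rw [← norm_smul_of_nonneg (by positivity : (0:ℝ) ≤ 1 / (k:ℝ)), norm_sub_rev]
      congr 1
      rw [smul_sub, smul_smul, one_div, inv_mul_cancel₀ (ne_of_gt hkposR), one_smul]
    rw [hnorm]
    have h1 : ‖(∑ j, a (g j)) - (k : ℝ) • μ‖ ^ 2 ≤ (k : ℝ) := hg
    have hnn : 0 ≤ ‖(∑ j, a (g j)) - (k : ℝ) • μ‖ := norm_nonneg _
    have hkey : ((1 / (k : ℝ)) * ‖(∑ j, a (g j)) - (k : ℝ) • μ‖) ^ 2 ≤ ε ^ 2 := by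
      rw [mul_pow]
      have h2 : (1 / (k : ℝ)) ^ 2 * ‖(∑ j, a (g j)) - (k : ℝ) • μ‖ ^ 2
          ≤ (1 / (k : ℝ)) ^ 2 * k := by
        apply mul_le_mul_of_nonneg_left h1 (by positivity)
      refine le_trans h2 ?_
      have : (1 / (k : ℝ)) ^ 2 * k = 1 / k := by field_simp
      rw [this]
      rw [div_le_iff₀ hε2] at hkge
      rw [div_le_iff₀ hkposR]
      nlinarith
    nlinarith [mul_nonneg (le_of_lt (by positivity : (0:ℝ) < 1 / (k:ℝ))) hnn]
end

section
/- Let $p \in \Delta^{n-1}$ be a point in the convex hull of unit vectors $a_1,\dots,a_n \in \mathbb{R}^d$ expressed as $p = \sum_i z_i a_i$. For any $N \ge 1$ there exist indices $i_1,\dots,i_N \in \{1,\dots,n\}$ (with repetition allowed) such that $\left\| p - \frac{1}{N}\sum_{t=1}^N a_{i_t} \right\|_2 \le \frac{1}{\sqrt{N}}$. -/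
open Finset

theorem approx_caratheodory_sampling (n d : ℕ) (a : Fin n → EuclideanSpace ℝ (Fin d))
    (ha : ∀ i, ‖a i‖ ≤ 1) (z : Fin n → ℝ) (hz0 : ∀ i, 0 ≤ z i)
    (hz1 : ∑ i, z i = 1) (p : EuclideanSpace ℝ (Fin d)) (hp : p = ∑ i, z i • a i)
    (N : ℕ) (hN : 1 ≤ N) :
    ∃ idx : Fin N → Fin n,
      ‖p - (N : ℝ)⁻¹ • ∑ t, a (idx t)‖ ≤ 1 / Real.sqrt N := by
  have hj : ∃ j, 0 < z j := by
    by_contra h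
    push_neg at h
    have : ∑ i, z i ≤ 0 := Finset.sum_nonpos fun i _ => h i
    linarith
  set b : Fin n → EuclideanSpace ℝ (Fin d) := fun i => a i - p with hb
  have hsum0 : ∑ i, z i • b i = 0 := by
    simp only [hb, smul_sub, Finset.sum_sub_distrib, ← hp, ← Finset.sum_smul, hz1, one_smul,
      sub_self]
  have hvar : ∑ i, z i * ‖b i‖ ^ 2 ≤ 1 := by
    have expand : ∀ i, ‖b i‖ ^ 2 = ‖a i‖ ^ 2 - 2 * inner ℝ (a i) p + ‖p‖ ^ 2 := fun i =>
      norm_sub_sq_real (a i) p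
    have h1 : ∑ i, z i * ‖b i‖ ^ 2
        = ∑ i, z i * ‖a i‖ ^ 2 - 2 * (inner ℝ (∑ i, z i • a i) p : ℝ) + (∑ i, z i) * ‖p‖ ^ 2 := by
      rw [sum_inner]
      simp_rw [real_inner_smul_left, expand, Finset.mul_sum, Finset.sum_mul]
      rw [← Finset.sum_sub_distrib, ← Finset.sum_add_distrib]
      apply Finset.sum_congr rfl
      intro i _
      ring
    rw [h1, ← hp, hz1, real_inner_self_eq_norm_sq]
    have h2 : ∑ i, z i * ‖a i‖ ^ 2 ≤ 1 := by
      calc ∑ i, z i * ‖a i‖ ^ 2 ≤ ∑ i, z i := by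
            apply Finset.sum_le_sum
            intro i _
            have h3 : ‖a i‖ ^ 2 ≤ 1 := by
              have := ha i
              nlinarith [norm_nonneg (a i)]
            nlinarith [hz0 i]
        _ = 1 := hz1
    nlinarith [sq_nonneg ‖p‖]
  have avg : ∀ c : Fin n → ℝ, ∃ i, c i ≤ ∑ j, z j * c j := by
    intro c
    by_contra h
    push_neg at h
    obtain ⟨j, hjz⟩ := hj
    set S := ∑ j, z j * c j with hS
    have hlt : ∑ i, z i * S < ∑ i, z i * c i :=
      Finset.sum_lt_sum (fun i _ => mul_le_mul_of_nonneg_left (h i).le (hz0 i))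
        ⟨j, Finset.mem_univ j, mul_lt_mul_of_pos_left (h j) hjz⟩
    rw [← Finset.sum_mul, hz1, one_mul] at hlt
    exact lt_irrefl _ hlt
  have key : ∀ M : ℕ, ∃ f : Fin M → Fin n, ‖∑ t, b (f t)‖ ^ 2 ≤ M := by
    intro M
    induction M with
    | zero => exact ⟨fun t => t.elim0, by simp⟩
    | succ M ih =>
      obtain ⟨f, hf⟩ := ih
      set S := ∑ t, b (f t) with hSdef
      have step : ∑ i, z i * ‖S + b i‖ ^ 2 ≤ ‖S‖ ^ 2 + 1 := by
        have expand : ∀ i, ‖S + b i‖ ^ 2 = ‖S‖ ^ 2 + 2 * inner ℝ S (b i) + ‖b i‖ ^ 2 := fun i =>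
          norm_add_sq_real S (b i)
        have h1 : ∑ i, z i * ‖S + b i‖ ^ 2
            = (∑ i, z i) * ‖S‖ ^ 2 + 2 * (inner ℝ S (∑ i, z i • b i) : ℝ)
              + ∑ i, z i * ‖b i‖ ^ 2 := by
          rw [inner_sum]
          simp_rw [real_inner_smul_right, expand, Finset.mul_sum, Finset.sum_mul]
          rw [← Finset.sum_add_distrib, ← Finset.sum_add_distrib]
          apply Finset.sum_congr rfl
          intro i _
          ring
        rw [h1, hsum0, hz1, inner_zero_right]
        linarith
      obtain ⟨i, hi⟩ := avg (fun i => ‖S + b i‖ ^ 2)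
      refine ⟨Fin.snoc f i, ?_⟩
      rw [Fin.sum_univ_castSucc]
      simp only [Fin.snoc_castSucc, Fin.snoc_last]
      push_cast
      calc ‖(∑ t : Fin M, b (f t)) + b i‖ ^ 2 = ‖S + b i‖ ^ 2 := by rw [hSdef]
        _ ≤ ∑ j, z j * ‖S + b j‖ ^ 2 := hi
        _ ≤ ‖S‖ ^ 2 + 1 := step
        _ ≤ M + 1 := by linarith
  obtain ⟨f, hf⟩ := key N
  refine ⟨f, ?_⟩
  have hNpos : (0 : ℝ) < N := by exact_mod_cast hN
  have hsplit : ∑ t, b (f t) = (∑ t, a (f t)) - (N : ℝ) • p := by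
    simp only [hb, Finset.sum_sub_distrib, Finset.sum_const, Finset.card_univ, Fintype.card_fin,
      Nat.cast_smul_eq_nsmul ℝ]
  have heq : p - (N : ℝ)⁻¹ • ∑ t, a (f t) = -((N : ℝ)⁻¹ • ∑ t, b (f t)) := by
    rw [hsplit, smul_sub, smul_smul, inv_mul_cancel₀ hNpos.ne', one_smul]
    abel
  rw [heq, norm_neg, norm_smul, norm_inv, Real.norm_natCast]
  have hnormS : ‖∑ t, b (f t)‖ ≤ Real.sqrt N := by
    rw [← Real.sqrt_sq (norm_nonneg _)]
    exact Real.sqrt_le_sqrt hf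
  have hsq : Real.sqrt N * Real.sqrt N = (N : ℝ) := Real.mul_self_sqrt hNpos.le
  have hfin : (N : ℝ)⁻¹ * Real.sqrt N = 1 / Real.sqrt N := by
    rw [eq_div_iff (by positivity : Real.sqrt N ≠ 0)]
    field_simp
    exact Real.sq_sqrt hNpos.le
  calc (N : ℝ)⁻¹ * ‖∑ t, b (f t)‖ ≤ (N : ℝ)⁻¹ * Real.sqrt N := by
        apply mul_le_mul_of_nonneg_left hnormS (by positivity)
    _ = 1 / Real.sqrt N := hfin
end
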